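/- For every x in [0,1] and every natural number i > 0, f((2 - x) / 3^i) = (2^(i-1) / 3^i) · (1 + f(x)). -/
import Mathlib


open intervalIntegral Set

theorem bourbaki_stmt (f : ℝ → ℝ)
    (hcont : ContinuousOn f (Set.Icc 0 1))
    (h0 : f 0 = 0) (h1 : f 1 = 1)
    (hw1 : ∀ x ∈ Set.Icc (0:ℝ) 1, f (x / 3) = (2/3) * f x)
    (hw2 : ∀ x ∈ Set.Icc (0:ℝ) 1, f ((2 - x) / 3) = (1/3) * (1 + f x))
    (hw3 : ∀ x ∈ Set.Icc (0:ℝ) 1, f ((2 + x) / 3) = 1/3 + (2/3) * f x) :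
    ∀ x ∈ Set.Icc (0:ℝ) 1, ∀ i : ℕ, 0 < i → f ((2 - x) / 3 ^ i) = (2 ^ (i - 1) / 3 ^ i) * (1 + f x) := by
  intro x hx i hi
  obtain ⟨hx0, hx1⟩ := hx
  induction i with
  | zero => omega
  | succ n ih =>
    rcases Nat.eq_zero_or_pos n with hn | hn
    · subst hn
      simpa using hw2 x ⟨hx0, hx1⟩
    · have hmem : (2 - x) / 3 ^ n ∈ Set.Icc (0:ℝ) 1 := by
        constructor
        · apply div_nonneg (by linarith) (by positivity)
        · rw [div_le_one (by positivity)]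
          have h3 : (3:ℝ) ≤ 3 ^ n := by
            calc (3:ℝ) = 3 ^ 1 := by norm_num
            _ ≤ 3 ^ n := by
              apply pow_le_pow_right₀ (by norm_num) hn
          nlinarith
      have key : (2 - x) / 3 ^ (n + 1) = ((2 - x) / 3 ^ n) / 3 := by
        rw [pow_succ]; ring
      rw [key, hw1 _ hmem, ih hn]
      obtain ⟨m, rfl⟩ := Nat.exists_eq_succ_of_ne_zero hn.ne'
      simp only [Nat.succ_sub_one]
      rw [pow_succ, pow_succ, pow_succ]
      ring
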